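/- If a = c = 0, 0 < b ≤ 1, d ≠ 0 (with -(1-b) ≤ d ≤ 1), then the set of fixed points of V in S² is exactly F₃ = {(x,y,z) ∈ S² : x = 0}, and for any initial point in S² the trajectory converges to a point of F₃. -/

import Mathlib

open Filter Topology

noncomputable def V (a b c d : ℝ) (p : ℝ × ℝ × ℝ) : ℝ × ℝ × ℝ :=
  (p.1 * (1 - b + d * p.2.1),
   p.2.1 * (1 - a - d * p.1 + c * p.2.2),
   p.2.2 * (1 - c * p.2.1) + a * p.2.1 + b * p.1)

def S2 : Set (ℝ × ℝ × ℝ) :=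
  {p | 0 ≤ p.1 ∧ 0 ≤ p.2.1 ∧ 0 ≤ p.2.2 ∧ p.1 + p.2.1 + p.2.2 = 1}

lemma Vsimp (b d : ℝ) (p : ℝ × ℝ × ℝ) :
    V 0 b 0 d p = (p.1 * (1 - b + d * p.2.1), p.2.1 * (1 - d * p.1), p.2.2 + b * p.1) := by
  refine Prod.ext ?_ (Prod.ext ?_ ?_) <;> simp [V] <;> ring

lemma Vmem (b d : ℝ) (hb0 : 0 < b) (hb1 : b ≤ 1) (hd1 : -(1 - b) ≤ d) (hd2 : d ≤ 1)
    {p : ℝ × ℝ × ℝ} (hp : p ∈ S2) : V 0 b 0 d p ∈ S2 := by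
  obtain ⟨hx, hy, hz, hs⟩ := hp
  rw [Vsimp]
  have hy1 : p.2.1 ≤ 1 := by linarith
  have hx1 : p.1 ≤ 1 := by linarith
  refine ⟨?_, ?_, ?_, ?_⟩
  · apply mul_nonneg hx
    rcases le_or_gt 0 d with h | h
    · nlinarith
    · nlinarith
  · apply mul_nonneg hy
    rcases le_or_gt 0 d with h | h
    · nlinarith
    · nlinarith
  · show (0:ℝ) ≤ p.2.2 + b * p.1
    nlinarith
  · show p.1 * (1 - b + d * p.2.1) + p.2.1 * (1 - d * p.1) + (p.2.2 + b * p.1) = 1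
    linear_combination hs

theorem stmt8 (b d : ℝ) (hb0 : 0 < b) (hb1 : b ≤ 1) (hd : d ≠ 0)
    (hd1 : -(1 - b) ≤ d) (hd2 : d ≤ 1) :
    {p ∈ S2 | V 0 b 0 d p = p} = {p ∈ S2 | p.1 = 0} ∧
    ∀ p ∈ S2, ∃ q ∈ {p ∈ S2 | p.1 = 0},
      Tendsto (fun n => (V 0 b 0 d)^[n] p) atTop (𝓝 q) := by
  constructor
  · ext p
    simp only [Set.mem_setOf_eq, Vsimp, Prod.ext_iff]
    constructor
    · rintro ⟨hp, h1, h2, h3⟩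
      refine ⟨hp, ?_⟩
      have : b * p.1 = 0 := by linarith
      have := hp.1
      nlinarith
    · rintro ⟨hp, hx⟩
      refine ⟨hp, ?_, ?_, ?_⟩ <;> rw [hx] <;> ring
  · intro p hp
    set o : ℕ → ℝ × ℝ × ℝ := fun n => (V 0 b 0 d)^[n] p with ho_def
    have ho : ∀ n, o n ∈ S2 := by
      intro n
      induction n with
      | zero => simpa [ho_def] using hp
      | succ k ih =>
        have : o (k + 1) = V 0 b 0 d (o k) := Function.iterate_succ_apply' _ _ _
        rw [this]
        exact Vmem b d hb0 hb1 hd1 hd2 ih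
    have hrec : ∀ n, o (n + 1) = V 0 b 0 d (o n) :=
      fun n => Function.iterate_succ_apply' _ _ _
    set s : ℕ → ℝ := fun n => (o n).1 + (o n).2.1 with hs_def
    have hstep : ∀ n, s (n + 1) = s n - b * (o n).1 := by
      intro n
      simp only [hs_def, hrec n, Vsimp]
      ring
    have hanti : Antitone s := by
      apply antitone_nat_of_succ_le
      intro n
      rw [hstep n]
      have := (ho n).1
      nlinarith
    have hbdd : BddBelow (Set.range s) := by
      refine ⟨0, ?_⟩
      rintro _ ⟨n, rfl⟩
      have h := ho n
      simp only [hs_def]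
      linarith [h.1, h.2.1]
    set L : ℝ := ⨅ n, s n with hL_def
    have hL : Tendsto s atTop (𝓝 L) := tendsto_atTop_ciInf hanti hbdd
    have hLshift : Tendsto (fun n => s (n + 1)) atTop (𝓝 L) :=
      hL.comp (tendsto_add_atTop_nat 1)
    have hx0 : Tendsto (fun n => (o n).1) atTop (𝓝 0) := by
      have h1 : Tendsto (fun n => (s n - s (n + 1)) / b) atTop (𝓝 0) := by
        have := (hL.sub hLshift).div_const b
        simpa using this
      convert h1 using 2 with n
      rw [hstep n]
      field_simp
      ring
    have hy : Tendsto (fun n => (o n).2.1) atTop (𝓝 L) := by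
      have := hL.sub hx0
      simp only [sub_zero] at this
      convert this using 2 with n
      simp [hs_def]
    have hz : Tendsto (fun n => (o n).2.2) atTop (𝓝 (1 - L)) := by
      have := (tendsto_const_nhds (x := (1 : ℝ))).sub hL
      convert this using 2 with n
      have h := (ho n).2.2.2
      simp only [hs_def]
      linarith
    have hL0 : 0 ≤ L := by
      apply le_ciInf
      intro n
      have h := ho n
      simp only [hs_def]
      linarith [h.1, h.2.1]
    have hL1 : L ≤ 1 := by
      have h0 : s 0 ≤ 1 := by
        have h := ho 0
        simp only [hs_def]
        linarith [h.2.2.1, h.2.2.2]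
      exact le_trans (ciInf_le hbdd 0) h0
    refine ⟨(0, L, 1 - L), ⟨⟨le_refl 0, hL0, show (0:ℝ) ≤ 1 - L by linarith,
      show (0:ℝ) + L + (1 - L) = 1 by ring⟩, rfl⟩, ?_⟩
    exact hx0.prodMk_nhds (hy.prodMk_nhds hz)
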